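/- arXiv:1206.2669 — 2 statements merged into one kernel-verified Lean document; each statement's English description precedes it below -/
import Mathlib

section
/- Privacy against Charlie in HamDist (message sufficiency): with A^n := π(Z^n ⊗ (X^n ⊖ R^n)) and B^n := π(Z^n ⊗ (R^n ⊖ Y^n)), where R^n is uniform on F^n, Z^n is uniform on (F\{0})^n, π is uniform on permutations, and (R^n, Z^n, π) is independent of (X^n, Y^n), we have I(A^n, B^n; X^n, Y^n | d_H(X^n, Y^n)) = 0. -/
/-- Probability mass of the event `A = a` under the weight function `p` on a
finite sample space. -/
def pmfOf {Ω α : Type*} [Fintype Ω] [DecidableEq α] (p : Ω → ℝ) (A : Ω → α) (a : α) : ℝ :=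
  ∑ ω, if A ω = a then p ω else 0

/-- Shannon entropy of the random variable `A`. -/
noncomputable def entH {Ω α : Type*} [Fintype Ω] [Fintype α] [DecidableEq α]
    (p : Ω → ℝ) (A : Ω → α) : ℝ :=
  ∑ a, Real.negMulLog (pmfOf p A a)

/-- Conditional mutual information `I(A ; X | B)`. -/
noncomputable def cmi {Ω α β γ : Type*} [Fintype Ω] [Fintype α] [Fintype β] [Fintype γ]
    [DecidableEq α] [DecidableEq β] [DecidableEq γ]
    (p : Ω → ℝ) (A : Ω → α) (X : Ω → β) (B : Ω → γ) : ℝ :=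
  entH p (fun ω => (A ω, B ω)) + entH p (fun ω => (X ω, B ω))
    - entH p (fun ω => (A ω, X ω, B ω)) - entH p B

section General
variable {Ω α β γ : Type*} [Fintype Ω] [Fintype α] [Fintype β] [Fintype γ]
  [DecidableEq α] [DecidableEq β] [DecidableEq γ]

lemma cmi_eq_zero_of_kernel (p : Ω → ℝ) (A : Ω → α) (X : Ω → β) (g : β → γ) (K : γ → α → ℝ)
    (hK : ∀ a x, pmfOf p (fun ω => (A ω, X ω)) (a, x) = K (g x) a * pmfOf p X x)
    (hK1 : ∀ b, ∑ a, K b a = 1) :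
    cmi p A X (fun ω => g (X ω)) = 0 := by
  have hXB : ∀ (x : β) (b : γ), pmfOf p (fun ω => (X ω, g (X ω))) (x, b)
      = if g x = b then pmfOf p X x else 0 := by
    intro x b
    unfold pmfOf
    by_cases h2 : g x = b
    · rw [if_pos h2]
      refine Finset.sum_congr rfl fun ω _ => ?_
      by_cases h1 : X ω = x <;> simp [Prod.ext_iff, h1, h2]
    · rw [if_neg h2]
      refine Finset.sum_eq_zero fun ω _ => ?_
      by_cases h1 : X ω = x <;> simp [Prod.ext_iff, h1, h2]
  have hAXB : ∀ (a : α) (x : β) (b : γ), pmfOf p (fun ω => (A ω, X ω, g (X ω))) (a, x, b)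
      = if g x = b then pmfOf p (fun ω => (A ω, X ω)) (a, x) else 0 := by
    intro a x b
    unfold pmfOf
    by_cases h2 : g x = b
    · rw [if_pos h2]
      refine Finset.sum_congr rfl fun ω _ => ?_
      by_cases h1 : X ω = x <;> simp [Prod.ext_iff, h1, h2]
    · rw [if_neg h2]
      refine Finset.sum_eq_zero fun ω _ => ?_
      by_cases h1 : X ω = x <;> simp [Prod.ext_iff, h1, h2]
  have hB : ∀ b : γ, pmfOf p (fun ω => g (X ω)) b = ∑ x, if g x = b then pmfOf p X x else 0 := by
    intro b
    unfold pmfOf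
    have h1 : ∀ x : β, (if g x = b then ∑ ω, if X ω = x then p ω else 0 else 0)
        = ∑ ω, if X ω = x then (if g x = b then p ω else 0) else 0 := by
      intro x; split_ifs with h <;> simp [h]
    rw [Finset.sum_congr rfl fun x _ => h1 x, Finset.sum_comm]
    refine Finset.sum_congr rfl fun ω _ => ?_
    rw [Finset.sum_ite_eq Finset.univ (X ω) (fun x => if g x = b then p ω else 0)]
    simp
  have hAB : ∀ (a : α) (b : γ), pmfOf p (fun ω => (A ω, g (X ω))) (a, b)
      = K b a * pmfOf p (fun ω => g (X ω)) b := by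
    intro a b
    have e1 : pmfOf p (fun ω => (A ω, g (X ω))) (a, b)
        = ∑ x, if g x = b then pmfOf p (fun ω => (A ω, X ω)) (a, x) else 0 := by
      unfold pmfOf
      have h1 : ∀ x : β, (if g x = b then ∑ ω, if (A ω, X ω) = (a, x) then p ω else 0 else 0)
          = ∑ ω, if X ω = x then
              (if g x = b then (if (A ω, X ω) = (a, x) then p ω else 0) else 0) else 0 := by
        intro x
        split_ifs with h
        · refine Finset.sum_congr rfl fun ω _ => ?_
          by_cases h1 : X ω = x <;> by_cases h3 : A ω = a <;> simp_all [Prod.ext_iff]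
        · refine (Finset.sum_eq_zero fun ω _ => ?_).symm
          simp [h]
      rw [Finset.sum_congr rfl fun x _ => h1 x, Finset.sum_comm]
      refine Finset.sum_congr rfl fun ω _ => ?_
      rw [Finset.sum_ite_eq Finset.univ (X ω)]
      by_cases h3 : A ω = a <;> simp [Prod.ext_iff, h3]
    rw [e1, hB, Finset.mul_sum]
    refine Finset.sum_congr rfl fun x _ => ?_
    by_cases h2 : g x = b
    · rw [if_pos h2, if_pos h2, hK, h2]
    · simp [h2]
  -- entropy computations
  set S : γ → ℝ := fun b => ∑ a, Real.negMulLog (K b a) with hS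
  have eXB : entH p (fun ω => (X ω, g (X ω))) = entH p X := by
    unfold entH
    rw [Fintype.sum_prod_type]
    refine Finset.sum_congr rfl fun x _ => ?_
    have h1 : ∀ b : γ, Real.negMulLog (pmfOf p (fun ω => (X ω, g (X ω))) (x, b))
        = if g x = b then Real.negMulLog (pmfOf p X x) else 0 := by
      intro b; rw [hXB]; split_ifs <;> simp [Real.negMulLog_zero]
    rw [Finset.sum_congr rfl fun b _ => h1 b, Finset.sum_ite_eq Finset.univ (g x)]
    simp
  have eAXB : entH p (fun ω => (A ω, X ω, g (X ω)))
      = entH p (fun ω => (A ω, X ω)) := by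
    unfold entH
    simp only [Fintype.sum_prod_type]
    refine Finset.sum_congr rfl fun a _ => Finset.sum_congr rfl fun x _ => ?_
    have h1 : ∀ b : γ, Real.negMulLog (pmfOf p (fun ω => (A ω, X ω, g (X ω))) (a, x, b))
        = if g x = b then Real.negMulLog (pmfOf p (fun ω => (A ω, X ω)) (a, x)) else 0 := by
      intro b; rw [hAXB]; split_ifs <;> simp [Real.negMulLog_zero]
    rw [Finset.sum_congr rfl fun b _ => h1 b, Finset.sum_ite_eq Finset.univ (g x)]
    simp
  have eAB : entH p (fun ω => (A ω, g (X ω)))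
      = entH p (fun ω => g (X ω)) + ∑ b, pmfOf p (fun ω => g (X ω)) b * S b := by
    unfold entH
    rw [Fintype.sum_prod_type]
    rw [Finset.sum_comm]
    rw [← Finset.sum_add_distrib]
    refine Finset.sum_congr rfl fun b _ => ?_
    have : ∀ a, Real.negMulLog (pmfOf p (fun ω => (A ω, g (X ω))) (a, b))
        = K b a * Real.negMulLog (pmfOf p (fun ω => g (X ω)) b)
          + pmfOf p (fun ω => g (X ω)) b * Real.negMulLog (K b a) := by
      intro a; rw [hAB, Real.negMulLog_mul]; ring
    rw [Finset.sum_congr rfl (fun a _ => this a), Finset.sum_add_distrib,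
      ← Finset.sum_mul, ← Finset.mul_sum, hK1, one_mul, hS]
  have eAX : entH p (fun ω => (A ω, X ω))
      = entH p X + ∑ x, pmfOf p X x * S (g x) := by
    unfold entH
    rw [Fintype.sum_prod_type]
    rw [Finset.sum_comm]
    rw [← Finset.sum_add_distrib]
    refine Finset.sum_congr rfl fun x _ => ?_
    have : ∀ a, Real.negMulLog (pmfOf p (fun ω => (A ω, X ω)) (a, x))
        = K (g x) a * Real.negMulLog (pmfOf p X x)
          + pmfOf p X x * Real.negMulLog (K (g x) a) := by
      intro a; rw [hK, Real.negMulLog_mul]; ring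
    rw [Finset.sum_congr rfl (fun a _ => this a), Finset.sum_add_distrib,
      ← Finset.sum_mul, ← Finset.mul_sum, hK1, one_mul, hS]
  have eS : ∑ x, pmfOf p X x * S (g x) = ∑ b, pmfOf p (fun ω => g (X ω)) b * S b := by
    have h1 : ∀ b : γ, pmfOf p (fun ω => g (X ω)) b * S b
        = ∑ x, (if g x = b then pmfOf p X x * S b else 0) := by
      intro b
      rw [hB b, Finset.sum_mul]
      refine Finset.sum_congr rfl fun x _ => ?_
      split_ifs <;> simp
    rw [Finset.sum_congr rfl fun b _ => h1 b, Finset.sum_comm]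
    refine Finset.sum_congr rfl fun x _ => ?_
    rw [Finset.sum_ite_eq Finset.univ (g x) (fun b => pmfOf p X x * S b)]
    simp
  unfold cmi
  rw [eAB, eXB, eAXB, eAX, eS]
  ring
end General

section Field
variable (F : Type*) [Field F] [Fintype F] [DecidableEq F]

/-- per-coordinate kernel: `e` records whether `x i = y i`. -/
noncomputable def cFB (e : Bool) (s t : F) : ℝ :=
  if e then (if s + t = 0 then 1 / (Fintype.card F : ℝ) else 0)
  else (if s + t = 0 then 0 else 1 / ((Fintype.card F : ℝ) * ((Fintype.card F : ℝ) - 1)))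

variable {F}

lemma qF_pos : (1 : ℝ) < (Fintype.card F : ℝ) := by
  exact_mod_cast Fintype.one_lt_card

lemma cFB_total (e : Bool) : ∑ s : F, ∑ t : F, cFB F e s t = 1 := by
  have hq : (0:ℝ) < (Fintype.card F : ℝ) := lt_trans one_pos (qF_pos (F := F))
  have hq1 : (0:ℝ) < (Fintype.card F : ℝ) - 1 := by linarith [qF_pos (F := F)]
  cases e
  · have h1 : ∀ s : F, ∑ t : F, cFB F false s t
        = (Fintype.card F : ℝ) * (1 / ((Fintype.card F : ℝ) * ((Fintype.card F : ℝ) - 1)))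
          - (1 / ((Fintype.card F : ℝ) * ((Fintype.card F : ℝ) - 1))) := by
      intro s
      have : ∀ t : F, cFB F false s t
          = (1 / ((Fintype.card F : ℝ) * ((Fintype.card F : ℝ) - 1)))
            - (if t = -s then (1 / ((Fintype.card F : ℝ) * ((Fintype.card F : ℝ) - 1))) else 0) := by
        intro t
        simp only [cFB, if_false, Bool.false_eq_true]
        have : s + t = 0 ↔ t = -s := by constructor <;> intro h <;> linear_combination h
        rw [if_congr this rfl rfl]
        split_ifs <;> ring
      rw [Finset.sum_congr rfl fun t _ => this t, Finset.sum_sub_distrib,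
        Finset.sum_ite_eq' Finset.univ (-s)]
      simp [Finset.card_univ, mul_comm]
    rw [Finset.sum_congr rfl fun s _ => h1 s]
    simp only [Finset.sum_const, Finset.card_univ, nsmul_eq_mul]
    field_simp
  · have h1 : ∀ s : F, ∑ t : F, cFB F true s t = 1 / (Fintype.card F : ℝ) := by
      intro s
      have : ∀ t : F, cFB F true s t
          = (if t = -s then (1 / (Fintype.card F : ℝ)) else 0) := by
        intro t
        simp only [cFB, if_true]
        have : s + t = 0 ↔ t = -s := by constructor <;> intro h <;> linear_combination h
        rw [if_congr this rfl rfl]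
      rw [Finset.sum_congr rfl fun t _ => this t, Finset.sum_ite_eq' Finset.univ (-s)]
      simp
    rw [Finset.sum_congr rfl fun s _ => h1 s]
    simp only [Finset.sum_const, Finset.card_univ, nsmul_eq_mul]
    field_simp

lemma coord_sum (X Y s t : F) :
    ∑ a : F, ∑ b : F,
      ((1 / (Fintype.card F : ℝ)) * (if b ≠ 0 then 1 / ((Fintype.card F : ℝ) - 1) else 0)
        * (if b * (X - a) = s ∧ b * (a - Y) = t then 1 else 0))
      = cFB F (decide (X = Y)) s t := by
  have hq : (0:ℝ) < (Fintype.card F : ℝ) := lt_trans one_pos (qF_pos (F := F))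
  have hq1 : (0:ℝ) < (Fintype.card F : ℝ) - 1 := by linarith [qF_pos (F := F)]
  set q : ℝ := (Fintype.card F : ℝ) with hqdef
  rw [Finset.sum_comm]
  have key : ∀ b : F,
      (∑ a : F, ((1 / q) * (if b ≠ 0 then 1 / (q - 1) else 0)
        * (if b * (X - a) = s ∧ b * (a - Y) = t then 1 else 0)))
      = if b ≠ 0 ∧ b * (X - Y) = s + t then 1 / (q * (q - 1)) else 0 := by
    intro b
    by_cases hb : b = 0
    · simp [hb]
    · have hcond : ∀ a : F, (b * (X - a) = s ∧ b * (a - Y) = t)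
          ↔ (a = X - s * b⁻¹ ∧ b * (X - Y) = s + t) := by
        intro a
        constructor
        · rintro ⟨h1, h2⟩
          refine ⟨?_, by linear_combination h1 + h2⟩
          have : b * a = b * (X - s * b⁻¹) := by
            field_simp
            linear_combination -h1
          exact mul_left_cancel₀ hb this
        · rintro ⟨ha, h2⟩
          subst ha
          have h3 : b * (X - (X - s * b⁻¹)) = s := by field_simp; ring
          refine ⟨h3, by linear_combination h2 - h3⟩
      have hsummand : ∀ a : F,
          ((1 / q) * (if b ≠ 0 then 1 / (q - 1) else 0)
            * (if b * (X - a) = s ∧ b * (a - Y) = t then 1 else 0))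
          = if a = X - s * b⁻¹ then (if b * (X - Y) = s + t then 1 / (q * (q-1)) else 0) else 0 := by
        intro a
        rw [if_congr (hcond a) rfl rfl, if_pos hb, ite_and]
        split_ifs <;> field_simp <;> ring
      rw [Finset.sum_congr rfl fun a _ => hsummand a,
        Finset.sum_ite_eq' Finset.univ (X - s * b⁻¹)]
      simp [hb]
  rw [Finset.sum_congr rfl fun b _ => key b]
  by_cases hxy : X = Y
  · subst hxy
    by_cases hst : s + t = 0
    · have h2 : ∀ b : F, (if b ≠ 0 ∧ b * (X - X) = s + t then 1 / (q * (q-1)) else 0)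
          = 1 / (q * (q-1)) - (if b = 0 then 1 / (q * (q-1)) else 0) := by
        intro b
        have hbx : b * (X - X) = s + t := by rw [sub_self, mul_zero, hst]
        by_cases hb : b = 0
        · simp [hb]
        · rw [if_pos ⟨hb, hbx⟩, if_neg hb, sub_zero]
      rw [Finset.sum_congr rfl fun b _ => h2 b, Finset.sum_sub_distrib,
        Finset.sum_ite_eq' Finset.univ (0 : F)]
      have h3 : cFB F (decide (X = X)) s t = 1 / q := by simp [cFB, hst]; exact hqdef.symm
      rw [h3]
      simp only [Finset.mem_univ, if_true, Finset.sum_const, Finset.card_univ, nsmul_eq_mul, ← hqdef]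
      field_simp
    · have h2 : ∀ b : F, (if b ≠ 0 ∧ b * (X - X) = s + t then 1 / (q * (q-1)) else 0) = 0 := by
        intro b
        rw [if_neg]
        rintro ⟨h3, h4⟩
        rw [sub_self, mul_zero] at h4
        exact hst h4.symm
      rw [Finset.sum_congr rfl fun b _ => h2 b]
      simp [cFB, hst]
  · have hd : X - Y ≠ 0 := sub_ne_zero.mpr hxy
    by_cases hst : s + t = 0
    · have h2 : ∀ b : F, (if b ≠ 0 ∧ b * (X - Y) = s + t then 1 / (q * (q-1)) else 0) = 0 := by
        intro b
        rw [if_neg]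
        rintro ⟨h3, h4⟩
        rw [hst] at h4
        rcases mul_eq_zero.mp h4 with h | h
        · exact h3 h
        · exact hd h
      rw [Finset.sum_congr rfl fun b _ => h2 b]
      simp [cFB, hxy, hst]
    · have h2 : ∀ b : F, (if b ≠ 0 ∧ b * (X - Y) = s + t then 1 / (q * (q-1)) else 0)
          = if b = (s + t) * (X - Y)⁻¹ then 1 / (q * (q-1)) else 0 := by
        intro b
        have : (b ≠ 0 ∧ b * (X - Y) = s + t) ↔ b = (s + t) * (X - Y)⁻¹ := by
          constructor
          · rintro ⟨h3, h4⟩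
            field_simp
            linear_combination h4
          · rintro rfl
            constructor
            · intro h
              rcases mul_eq_zero.mp h with h | h
              · exact hst h
              · exact hd (by simpa using inv_eq_zero.mp h)
            · field_simp
        rw [if_congr this rfl rfl]
      rw [Finset.sum_congr rfl fun b _ => h2 b,
        Finset.sum_ite_eq' Finset.univ ((s + t) * (X - Y)⁻¹)]
      simp [cFB, hxy, hst]
      rfl


section Perm
variable {n : ℕ}

/-- Averaged product kernel over a random permutation. -/
noncomputable def Sfun (e : Fin n → Bool) (u v : Fin n → F) : ℝ :=
  (1 / (n.factorial : ℝ)) * ∑ σ : Equiv.Perm (Fin n), ∏ i, cFB F (e (σ i)) (u i) (v i)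

lemma Sfun_comp (τ : Equiv.Perm (Fin n)) (e : Fin n → Bool) (u v : Fin n → F) :
    Sfun (fun i => e (τ i)) u v = Sfun e u v := by
  unfold Sfun
  congr 1
  exact Fintype.sum_equiv (Equiv.mulLeft τ)
    (fun σ => ∏ i, cFB F (e (τ (σ i))) (u i) (v i))
    (fun σ => ∏ i, cFB F (e (σ i)) (u i) (v i)) (fun σ => rfl)

lemma exists_perm_comp {α : Type*} [Fintype α] [DecidableEq α] (e e' : α → Bool)
    (h : (Finset.univ.filter fun i => e i = true).card
       = (Finset.univ.filter fun i => e' i = true).card) :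
    ∃ τ : Equiv.Perm α, ∀ i, e (τ i) = e' i := by
  have h1 : Fintype.card {i // e' i = true} = Fintype.card {i // e i = true} := by
    rw [Fintype.card_subtype, Fintype.card_subtype, h]
  have h2 : Fintype.card {i // ¬ e' i = true} = Fintype.card {i // ¬ e i = true} := by
    rw [Fintype.card_subtype_compl, Fintype.card_subtype_compl, h1]
  refine ⟨Equiv.subtypeCongr (Fintype.equivOfCardEq h1) (Fintype.equivOfCardEq h2), fun i => ?_⟩
  by_cases hi : e' i = true
  · have hτ : (Equiv.subtypeCongr (Fintype.equivOfCardEq h1) (Fintype.equivOfCardEq h2)) i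
        = ((Fintype.equivOfCardEq h1) ⟨i, hi⟩ : α) := by
      simp [Equiv.subtypeCongr, hi]
    rw [hτ, ((Fintype.equivOfCardEq h1) ⟨i, hi⟩).2, hi]
  · have hτ : (Equiv.subtypeCongr (Fintype.equivOfCardEq h1) (Fintype.equivOfCardEq h2)) i
        = ((Fintype.equivOfCardEq h2) ⟨i, hi⟩ : α) := by
      simp [Equiv.subtypeCongr, hi]
    rw [hτ]
    have h3 := ((Fintype.equivOfCardEq h2) ⟨i, hi⟩).2
    rw [Bool.not_eq_true] at h3 hi
    rw [h3, hi]

lemma Sfun_card_congr (e e' : Fin n → Bool)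
    (h : (Finset.univ.filter fun i => e i = true).card
       = (Finset.univ.filter fun i => e' i = true).card)
    (u v : Fin n → F) : Sfun e u v = Sfun e' u v := by
  obtain ⟨τ, hτ⟩ := exists_perm_comp e e' h
  calc Sfun e u v = Sfun (fun i => e (τ i)) u v := (Sfun_comp τ e u v).symm
  _ = Sfun e' u v := by
    congr 1
    funext i
    exact hτ i

lemma card_filter_lt (d : ℕ) (hd : d ≤ n) :
    (Finset.univ.filter fun i : Fin n => (i : ℕ) < d).card = d := by
  have : (Finset.univ.filter fun i : Fin n => (i : ℕ) < d)
      = (Finset.range d).attachFin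
          (fun m hm => lt_of_lt_of_le (Finset.mem_range.mp hm) hd) := by
    ext i
    simp [Finset.mem_attachFin]
  rw [this, Finset.card_attachFin, Finset.card_range]

lemma card_filter_le (d : ℕ) (hd : d ≤ n) :
    (Finset.univ.filter fun i : Fin n => decide (d ≤ (i : ℕ)) = true).card = n - d := by
  have h1 : ∀ i : Fin n, (decide (d ≤ (i : ℕ)) = true) = ¬ ((i : ℕ) < d) := by
    intro i
    simp [decide_eq_true_eq, not_lt]
  have h2 := Finset.card_filter_add_card_filter_not
    (s := (Finset.univ : Finset (Fin n))) (p := fun i : Fin n => (i : ℕ) < d)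
  rw [Finset.card_univ, Fintype.card_fin] at h2
  have h3 : (Finset.univ.filter fun i : Fin n => decide (d ≤ (i : ℕ)) = true)
      = (Finset.univ.filter fun i : Fin n => ¬ ((i : ℕ) < d)) := by
    ext i
    simp [not_lt]
  rw [h3]
  have := card_filter_lt (n := n) d hd
  omega


lemma graw_key (x y u v : Fin n → F) (σ : Equiv.Perm (Fin n)) :
    (∑ r : Fin n → F, ∑ z : Fin n → F,
      (if (∀ i, z (σ i) * (x (σ i) - r (σ i)) = u i ∧ z (σ i) * (r (σ i) - y (σ i)) = v i)
       then (1 / (Fintype.card F : ℝ) ^ n)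
         * (if ∀ i, z i ≠ 0 then 1 / ((Fintype.card F : ℝ) - 1) ^ n else 0)
         * (1 / (n.factorial : ℝ))
       else 0))
    = (1 / (n.factorial : ℝ)) * ∏ i, cFB F (decide (x (σ i) = y (σ i))) (u i) (v i) := by
  set q : ℝ := (Fintype.card F : ℝ) with hq
  -- reindex z by σ
  have hz : ∀ r : Fin n → F,
      (∑ z : Fin n → F,
        (if (∀ i, z (σ i) * (x (σ i) - r (σ i)) = u i ∧ z (σ i) * (r (σ i) - y (σ i)) = v i)
         then (1 / q ^ n) * (if ∀ i, z i ≠ 0 then 1 / (q - 1) ^ n else 0)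
           * (1 / (n.factorial : ℝ)) else 0))
      = (∑ z : Fin n → F,
        (if (∀ i, z i * (x (σ i) - r (σ i)) = u i ∧ z i * (r (σ i) - y (σ i)) = v i)
         then (1 / q ^ n) * (if ∀ i, z i ≠ 0 then 1 / (q - 1) ^ n else 0)
           * (1 / (n.factorial : ℝ)) else 0)) := by
    intro r
    refine Fintype.sum_equiv (Equiv.arrowCongr σ.symm (Equiv.refl F)) _ _ (fun z => ?_)
    have h2 : (∀ i, z i ≠ 0) ↔ (∀ i, z (σ i) ≠ 0) :=
      ⟨fun h i => h _, fun h i => by simpa using h (σ.symm i)⟩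
    simp only [Equiv.arrowCongr_apply, Equiv.coe_refl, Function.comp, Equiv.symm_symm, id,
      Equiv.symm_apply_apply, Equiv.apply_symm_apply]
    simp only [h2]
  rw [Finset.sum_congr rfl fun r _ => hz r]
  -- reindex r by σ
  have hr :
      (∑ r : Fin n → F, ∑ z : Fin n → F,
        (if (∀ i, z i * (x (σ i) - r (σ i)) = u i ∧ z i * (r (σ i) - y (σ i)) = v i)
         then (1 / q ^ n) * (if ∀ i, z i ≠ 0 then 1 / (q - 1) ^ n else 0)
           * (1 / (n.factorial : ℝ)) else 0))
      = (∑ r : Fin n → F, ∑ z : Fin n → F,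
        (if (∀ i, z i * (x (σ i) - r i) = u i ∧ z i * (r i - y (σ i)) = v i)
         then (1 / q ^ n) * (if ∀ i, z i ≠ 0 then 1 / (q - 1) ^ n else 0)
           * (1 / (n.factorial : ℝ)) else 0)) := by
    refine Fintype.sum_equiv (Equiv.arrowCongr σ.symm (Equiv.refl F)) _ _ (fun r => ?_)
    simp only [Equiv.arrowCongr_apply, Equiv.coe_refl, Function.comp, Equiv.symm_symm, id,
      Equiv.symm_apply_apply, Equiv.apply_symm_apply]
  rw [hr]
  -- rewrite summand as a product over coordinates
  have hsummand : ∀ r z : Fin n → F,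
      (if (∀ i, z i * (x (σ i) - r i) = u i ∧ z i * (r i - y (σ i)) = v i)
       then (1 / q ^ n) * (if ∀ i, z i ≠ 0 then 1 / (q - 1) ^ n else 0)
         * (1 / (n.factorial : ℝ)) else 0)
      = (1 / (n.factorial : ℝ)) * ∏ i,
          ((1 / q) * (if z i ≠ 0 then 1 / (q - 1) else 0)
            * (if z i * (x (σ i) - r i) = u i ∧ z i * (r i - y (σ i)) = v i then 1 else 0)) := by
    intro r z
    rw [Finset.prod_mul_distrib, Finset.prod_mul_distrib]
    have e1 : (∏ _i : Fin n, (1 / q)) = 1 / q ^ n := by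
      rw [Finset.prod_const, Finset.card_univ, Fintype.card_fin, one_div, one_div, inv_pow]
    have e2 : (∏ i : Fin n, (if z i ≠ 0 then 1 / (q - 1) else 0))
        = (if ∀ i, z i ≠ 0 then 1 / (q - 1) ^ n else 0) := by
      by_cases h : ∀ i, z i ≠ 0
      · rw [if_pos h, Finset.prod_congr rfl fun i _ => if_pos (h i), Finset.prod_const,
          Finset.card_univ, Fintype.card_fin, one_div, one_div, inv_pow]
      · rw [if_neg h]
        push_neg at h
        obtain ⟨i0, h0⟩ := h
        exact Finset.prod_eq_zero (Finset.mem_univ i0) (by simp [h0])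
    have e3 : (∏ i : Fin n,
          (if z i * (x (σ i) - r i) = u i ∧ z i * (r i - y (σ i)) = v i then (1:ℝ) else 0))
        = (if (∀ i, z i * (x (σ i) - r i) = u i ∧ z i * (r i - y (σ i)) = v i)
            then (1:ℝ) else 0) := by
      rw [Finset.prod_boole]
      simp
    rw [e1, e2, e3]
    split_ifs <;> ring
  rw [Finset.sum_congr rfl fun r _ =>
    Finset.sum_congr rfl fun z _ => hsummand r z]
  simp only [← Finset.mul_sum]
  congr 1
  have step1 : ∀ r : Fin n → F,
      (∑ z : Fin n → F, ∏ i,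
        ((1 / q) * (if z i ≠ 0 then 1 / (q - 1) else 0)
          * (if z i * (x (σ i) - r i) = u i ∧ z i * (r i - y (σ i)) = v i then 1 else 0)))
      = ∏ i, ∑ t : F,
          ((1 / q) * (if t ≠ 0 then 1 / (q - 1) else 0)
            * (if t * (x (σ i) - r i) = u i ∧ t * (r i - y (σ i)) = v i then 1 else 0)) := by
    intro r
    exact (Fintype.prod_sum (κ := fun _ : Fin n => F)
      (fun i t => (1 / q * if t ≠ 0 then 1 / (q - 1) else 0) *
        if t * (x (σ i) - r i) = u i ∧ t * (r i - y (σ i)) = v i then 1 else 0)).symm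
  rw [Finset.sum_congr rfl fun r _ => step1 r]
  have step2 : (∑ r : Fin n → F, ∏ i, ∑ t : F,
        ((1 / q) * (if t ≠ 0 then 1 / (q - 1) else 0)
          * (if t * (x (σ i) - r i) = u i ∧ t * (r i - y (σ i)) = v i then 1 else 0)))
      = ∏ i, ∑ s : F, ∑ t : F,
          ((1 / q) * (if t ≠ 0 then 1 / (q - 1) else 0)
            * (if t * (x (σ i) - s) = u i ∧ t * (s - y (σ i)) = v i then 1 else 0)) :=
    (Fintype.prod_sum (κ := fun _ : Fin n => F)
      (fun i s => ∑ t : F, (1 / q * if t ≠ 0 then 1 / (q - 1) else 0) *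
        if t * (x (σ i) - s) = u i ∧ t * (s - y (σ i)) = v i then 1 else 0)).symm
  rw [step2]
  refine Finset.prod_congr rfl fun i _ => ?_
  exact coord_sum (x (σ i)) (y (σ i)) (u i) (v i)

lemma graw_eq (x y u v : Fin n → F) :
    (∑ r : Fin n → F, ∑ z : Fin n → F, ∑ σ : Equiv.Perm (Fin n),
      (if (∀ i, z (σ i) * (x (σ i) - r (σ i)) = u i ∧ z (σ i) * (r (σ i) - y (σ i)) = v i)
       then (1 / (Fintype.card F : ℝ) ^ n)
         * (if ∀ i, z i ≠ 0 then 1 / ((Fintype.card F : ℝ) - 1) ^ n else 0)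
         * (1 / (n.factorial : ℝ))
       else 0))
    = Sfun (fun i => decide (x i = y i)) u v := by
  rw [Finset.sum_congr rfl fun r (_ : r ∈ Finset.univ) => Finset.sum_comm, Finset.sum_comm]
  unfold Sfun
  rw [Finset.mul_sum]
  exact Finset.sum_congr rfl fun σ _ => graw_key x y u v σ


lemma Sfun_total (e : Fin n → Bool) :
    (∑ u : Fin n → F, ∑ v : Fin n → F, Sfun e u v) = 1 := by
  unfold Sfun
  simp only [← Finset.mul_sum]
  rw [Finset.sum_congr rfl fun u (_ : u ∈ Finset.univ) => Finset.sum_comm, Finset.sum_comm]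
  have h1 : ∀ σ : Equiv.Perm (Fin n),
      (∑ u : Fin n → F, ∑ v : Fin n → F, ∏ i, cFB F (e (σ i)) (u i) (v i)) = 1 := by
    intro σ
    have s1 : ∀ u : Fin n → F, (∑ v : Fin n → F, ∏ i, cFB F (e (σ i)) (u i) (v i))
        = ∏ i, ∑ t : F, cFB F (e (σ i)) (u i) t := fun u =>
      (Fintype.prod_sum (κ := fun _ : Fin n => F) (fun i t => cFB F (e (σ i)) (u i) t)).symm
    rw [Finset.sum_congr rfl fun u _ => s1 u,
      show (∑ u : Fin n → F, ∏ i, ∑ t : F, cFB F (e (σ i)) (u i) t)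
          = ∏ i, ∑ s : F, ∑ t : F, cFB F (e (σ i)) s t from
        (Fintype.prod_sum (κ := fun _ : Fin n => F)
          (fun i s => ∑ t : F, cFB F (e (σ i)) s t)).symm,
      Finset.prod_congr rfl fun i _ => cFB_total (e (σ i))]
    exact Finset.prod_const_one
  rw [Finset.sum_congr rfl fun σ _ => h1 σ]
  simp only [Finset.sum_const, Finset.card_univ, Fintype.card_perm, Fintype.card_fin,
    nsmul_eq_mul, mul_one]
  rw [one_div, inv_mul_cancel₀]
  exact_mod_cast Nat.factorial_ne_zero n

lemma card_eq_sub_hamming (x y : Fin n → F) :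
    (Finset.univ.filter fun i => decide (x i = y i) = true).card = n - hammingDist x y := by
  classical
  have h1 : (Finset.univ.filter fun i => decide (x i = y i) = true)
      = (Finset.univ.filter fun i => x i = y i) := by
    ext i; simp
  have h2 := Finset.card_filter_add_card_filter_not
    (s := (Finset.univ : Finset (Fin n))) (p := fun i => x i = y i)
  rw [Finset.card_univ, Fintype.card_fin] at h2
  have h3 : hammingDist x y = (Finset.univ.filter fun i => ¬ (x i = y i)).card := by
    unfold hammingDist
    congr 1
  rw [h1]
  omega

end Perm
end Field

/-- Privacy against Charlie in `HamDist`: with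
`A^n = π(Z^n ⊗ (X^n ⊖ R^n))` and `B^n = π(Z^n ⊗ (R^n ⊖ Y^n))`, where `R^n` is
uniform on `F^n`, `Z^n` uniform on `(F\{0})^n`, `π` uniform on permutations,
all mutually independent and independent of `(X^n, Y^n)`, we have
`I(A^n, B^n ; X^n, Y^n | d_H(X^n, Y^n)) = 0`. -/
theorem hamDist_privacy_charlie {Ω F : Type*} [Fintype Ω] [Field F] [Fintype F]
    [DecidableEq F] (n : ℕ) [DecidableEq (Equiv.Perm (Fin n))]
    (p : Ω → ℝ) (hp0 : ∀ ω, 0 ≤ p ω) (hp1 : ∑ ω, p ω = 1)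
    (X Y R Z : Ω → (Fin n → F)) (Pm : Ω → Equiv.Perm (Fin n))
    (hRunif : ∀ r : Fin n → F, pmfOf p R r = 1 / (Fintype.card F : ℝ) ^ n)
    (hZunif : ∀ z : Fin n → F,
      pmfOf p Z z = if ∀ i, z i ≠ 0 then 1 / ((Fintype.card F : ℝ) - 1) ^ n else 0)
    (hPmunif : ∀ σ : Equiv.Perm (Fin n), pmfOf p Pm σ = 1 / (Nat.factorial n : ℝ))
    (hindep : ∀ (r z : Fin n → F) (σ : Equiv.Perm (Fin n)) (x y : Fin n → F),
      pmfOf p (fun ω => (R ω, Z ω, Pm ω, X ω, Y ω)) (r, z, σ, x, y) =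
        pmfOf p R r * pmfOf p Z z * pmfOf p Pm σ *
          pmfOf p (fun ω => (X ω, Y ω)) (x, y)) :
    cmi p
      (fun ω => ((fun i => Z ω (Pm ω i) * (X ω (Pm ω i) - R ω (Pm ω i))),
                 (fun i => Z ω (Pm ω i) * (R ω (Pm ω i) - Y ω (Pm ω i)))))
      (fun ω => (X ω, Y ω))
      (fun ω => (Fin.ofNat (n+1) (hammingDist (X ω) (Y ω)) : Fin (n+1))) = 0 := by
  classical
  have hK1 : ∀ d : Fin (n+1),
      (∑ uv : (Fin n → F) × (Fin n → F),
        Sfun (fun i : Fin n => decide ((d : ℕ) ≤ (i : ℕ))) uv.1 uv.2) = 1 := by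
    intro d
    rw [Fintype.sum_prod_type]
    exact Sfun_total _
  have hK : ∀ (a : (Fin n → F) × (Fin n → F)) (xy : (Fin n → F) × (Fin n → F)),
      pmfOf p (fun ω => (((fun i => Z ω (Pm ω i) * (X ω (Pm ω i) - R ω (Pm ω i))),
          (fun i => Z ω (Pm ω i) * (R ω (Pm ω i) - Y ω (Pm ω i)))), (X ω, Y ω))) (a, xy)
      = Sfun (fun i : Fin n =>
            decide ((((Fin.ofNat (n+1) (hammingDist xy.1 xy.2) : Fin (n+1)) : Fin (n+1)) : ℕ) ≤ (i : ℕ))) a.1 a.2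
        * pmfOf p (fun ω => (X ω, Y ω)) xy := by
    rintro ⟨u, v⟩ ⟨x, y⟩
    have expand : pmfOf p (fun ω => (((fun i => Z ω (Pm ω i) * (X ω (Pm ω i) - R ω (Pm ω i))),
          (fun i => Z ω (Pm ω i) * (R ω (Pm ω i) - Y ω (Pm ω i)))), (X ω, Y ω))) ((u,v), (x,y))
        = ∑ r : Fin n → F, ∑ z : Fin n → F, ∑ σ : Equiv.Perm (Fin n),
            (if (∀ i, z (σ i) * (x (σ i) - r (σ i)) = u i ∧ z (σ i) * (r (σ i) - y (σ i)) = v i)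
             then pmfOf p (fun ω => (R ω, Z ω, Pm ω, X ω, Y ω)) (r, z, σ, x, y) else 0) := by
      have push : ∀ (r z : Fin n → F) (σ : Equiv.Perm (Fin n)),
          (if (∀ i, z (σ i) * (x (σ i) - r (σ i)) = u i ∧ z (σ i) * (r (σ i) - y (σ i)) = v i)
           then pmfOf p (fun ω => (R ω, Z ω, Pm ω, X ω, Y ω)) (r, z, σ, x, y) else 0)
          = ∑ ω, (if (∀ i, z (σ i) * (x (σ i) - r (σ i)) = u i
                      ∧ z (σ i) * (r (σ i) - y (σ i)) = v i)
              then (if (R ω, Z ω, Pm ω, X ω, Y ω) = (r, z, σ, x, y) then p ω else 0) else 0) := by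
        intro r z σ
        split_ifs with h
        · rfl
        · simp
      rw [Finset.sum_congr rfl fun r (_ : r ∈ Finset.univ) =>
          Finset.sum_congr rfl fun z (_ : z ∈ Finset.univ) =>
          Finset.sum_congr rfl fun σ (_ : σ ∈ Finset.univ) => push r z σ]
      rw [Finset.sum_congr rfl fun r (_ : r ∈ Finset.univ) =>
          Finset.sum_congr rfl fun z (_ : z ∈ Finset.univ) => Finset.sum_comm]
      rw [Finset.sum_congr rfl fun r (_ : r ∈ Finset.univ) => Finset.sum_comm]
      rw [Finset.sum_comm]
      unfold pmfOf
      refine Finset.sum_congr rfl fun ω _ => ?_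
      symm
      beta_reduce
      rw [Finset.sum_eq_single_of_mem (R ω) (Finset.mem_univ _) (fun r _ hr =>
        Finset.sum_eq_zero fun z _ => Finset.sum_eq_zero fun σ _ => by
          have hne : ¬ ((R ω, Z ω, Pm ω, X ω, Y ω) = (r, z, σ, x, y)) := by
            simp only [Prod.ext_iff]
            tauto
          simp [hne])]
      rw [Finset.sum_eq_single_of_mem (Z ω) (Finset.mem_univ _) (fun z _ hz =>
        Finset.sum_eq_zero fun σ _ => by
          have hne : ¬ ((R ω, Z ω, Pm ω, X ω, Y ω) = (R ω, z, σ, x, y)) := by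
            simp only [Prod.ext_iff]
            tauto
          simp [hne])]
      rw [Finset.sum_eq_single_of_mem (Pm ω) (Finset.mem_univ _) (fun σ _ hσ => by
          have hne : ¬ ((R ω, Z ω, Pm ω, X ω, Y ω) = (R ω, Z ω, σ, x, y)) := by
            simp only [Prod.ext_iff]
            tauto
          simp [hne])]
      by_cases hx : X ω = x
      · by_cases hy : Y ω = y
        · subst hx
          subst hy
          rw [if_pos rfl]
          refine (if_congr ?_ rfl rfl).symm
          constructor
          · intro h i
            simp only [Prod.ext_iff, funext_iff] at h
            exact ⟨h.1.1 i, h.1.2 i⟩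
          · intro h
            have h1 : (fun i => Z ω (Pm ω i) * (X ω (Pm ω i) - R ω (Pm ω i))) = u :=
              funext fun i => (h i).1
            have h2 : (fun i => Z ω (Pm ω i) * (R ω (Pm ω i) - Y ω (Pm ω i))) = v :=
              funext fun i => (h i).2
            simp [Prod.ext_iff, h1, h2]
        · have h1 : ¬ ((R ω, Z ω, Pm ω, X ω, Y ω) = (R ω, Z ω, Pm ω, x, y)) := by
            simp only [Prod.ext_iff]; tauto
          have h2 : ¬ ((((fun i => Z ω (Pm ω i) * (X ω (Pm ω i) - R ω (Pm ω i))),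
                (fun i => Z ω (Pm ω i) * (R ω (Pm ω i) - Y ω (Pm ω i)))), (X ω, Y ω))
              = ((u,v), (x,y))) := by
            simp only [Prod.ext_iff]; tauto
          simp [h1, h2]
      · have h1 : ¬ ((R ω, Z ω, Pm ω, X ω, Y ω) = (R ω, Z ω, Pm ω, x, y)) := by
          simp only [Prod.ext_iff]; tauto
        have h2 : ¬ ((((fun i => Z ω (Pm ω i) * (X ω (Pm ω i) - R ω (Pm ω i))),
              (fun i => Z ω (Pm ω i) * (R ω (Pm ω i) - Y ω (Pm ω i)))), (X ω, Y ω))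
            = ((u,v), (x,y))) := by
          simp only [Prod.ext_iff]; tauto
        simp [h1, h2]
    rw [expand]
    have hw : ∀ (r z : Fin n → F) (σ : Equiv.Perm (Fin n)),
        pmfOf p (fun ω => (R ω, Z ω, Pm ω, X ω, Y ω)) (r, z, σ, x, y)
        = ((1 / (Fintype.card F : ℝ) ^ n)
            * (if ∀ i, z i ≠ 0 then 1 / ((Fintype.card F : ℝ) - 1) ^ n else 0)
            * (1 / (n.factorial : ℝ))) * pmfOf p (fun ω => (X ω, Y ω)) (x, y) := by
      intro r z σ
      rw [hindep, hRunif, hZunif, hPmunif]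
    have hsum : ∀ (r z : Fin n → F) (σ : Equiv.Perm (Fin n)),
        (if (∀ i, z (σ i) * (x (σ i) - r (σ i)) = u i ∧ z (σ i) * (r (σ i) - y (σ i)) = v i)
         then pmfOf p (fun ω => (R ω, Z ω, Pm ω, X ω, Y ω)) (r, z, σ, x, y) else 0)
        = (if (∀ i, z (σ i) * (x (σ i) - r (σ i)) = u i ∧ z (σ i) * (r (σ i) - y (σ i)) = v i)
           then (1 / (Fintype.card F : ℝ) ^ n)
             * (if ∀ i, z i ≠ 0 then 1 / ((Fintype.card F : ℝ) - 1) ^ n else 0)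
             * (1 / (n.factorial : ℝ)) else 0) * pmfOf p (fun ω => (X ω, Y ω)) (x, y) := by
      intro r z σ
      rw [hw r z σ, ite_mul, zero_mul]
    rw [Finset.sum_congr rfl fun r (_ : r ∈ Finset.univ) =>
        Finset.sum_congr rfl fun z (_ : z ∈ Finset.univ) =>
        Finset.sum_congr rfl fun σ (_ : σ ∈ Finset.univ) => hsum r z σ]
    simp only [← Finset.sum_mul]
    rw [graw_eq x y u v]
    congr 1
    apply Sfun_card_congr
    rw [card_eq_sub_hamming x y]
    have hd : hammingDist x y ≤ n := by
      have := hammingDist_le_card_fintype (x := x) (y := y)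
      simpa using this
    have hv : (((Fin.ofNat (n+1) (hammingDist x y) : Fin (n+1))) : ℕ) = hammingDist x y := by
      rw [Fin.val_ofNat, Nat.mod_eq_of_lt]
      omega
    rw [card_filter_le _ (by omega : (((Fin.ofNat (n+1) (hammingDist x y) : Fin (n+1))) : ℕ) ≤ n)]
    rw [hv]
  exact cmi_eq_zero_of_kernel p
    (fun ω => ((fun i => Z ω (Pm ω i) * (X ω (Pm ω i) - R ω (Pm ω i))),
               (fun i => Z ω (Pm ω i) * (R ω (Pm ω i) - Y ω (Pm ω i)))))
    (fun ω => (X ω, Y ω))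
    (fun xy => (Fin.ofNat (n+1) (hammingDist xy.1 xy.2) : Fin (n+1)))
    (fun d uv => Sfun (fun i : Fin n => decide ((d : ℕ) ≤ (i : ℕ))) uv.1 uv.2)
    hK hK1
end

section
/- Share independence in HamDist: with R^n uniform on F^n independent of (X^n, Y^n, Z^n, π), the share B^n = π(Z^n ⊗ (R^n ⊖ Y^n)) is conditionally independent of (X^n, Y^n) given S = A^n ⊕ B^n = π(Z^n ⊗ (X^n ⊖ Y^n)); formally H(X^n,Y^n | B^n, S) = H(X^n,Y^n | S). -/
/-- Conditional entropy `H(A | B)`. -/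
noncomputable def condEntH {Ω α β : Type*} [Fintype Ω] [Fintype α] [Fintype β]
    [DecidableEq α] [DecidableEq β] (p : Ω → ℝ) (A : Ω → α) (B : Ω → β) : ℝ :=
  entH p (fun ω => (A ω, B ω)) - entH p B

lemma pmfOf_congr {Ω α β : Type*} [Fintype Ω] [DecidableEq α] [DecidableEq β]
    (p : Ω → ℝ) {A : Ω → α} {a : α} {A' : Ω → β} {a' : β}
    (h : ∀ ω, A ω = a ↔ A' ω = a') : pmfOf p A a = pmfOf p A' a' :=
  Finset.sum_congr rfl fun ω _ => if_congr (h ω) rfl rfl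

lemma sum_pmfOf {Ω α : Type*} [Fintype Ω] [Fintype α] [DecidableEq α]
    (p : Ω → ℝ) (A : Ω → α) : ∑ a, pmfOf p A a = ∑ ω, p ω := by
  unfold pmfOf
  rw [Finset.sum_comm]
  refine Finset.sum_congr rfl fun ω _ => ?_
  rw [Finset.sum_ite_eq Finset.univ (A ω) (fun _ => p ω)]
  simp

lemma pmf_comp {Ω τ γ : Type*} [Fintype Ω] [Fintype τ] [DecidableEq τ] [DecidableEq γ]
    (p : Ω → ℝ) (T : Ω → τ) (G : τ → γ) (g : γ) :
    pmfOf p (fun ω => G (T ω)) g = ∑ t, if G t = g then pmfOf p T t else 0 := by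
  unfold pmfOf
  have h1 : ∀ t : τ, (if G t = g then ∑ ω, (if T ω = t then p ω else 0) else 0)
      = ∑ ω, if T ω = t then (if G t = g then p ω else 0) else 0 := by
    intro t; split_ifs with h <;> simp
  rw [Finset.sum_congr rfl (fun t _ => h1 t), Finset.sum_comm]
  refine Finset.sum_congr rfl fun ω _ => ?_
  rw [Finset.sum_ite_eq Finset.univ (T ω) (fun t => if G t = g then p ω else 0)]
  simp

lemma key_factor {Ω F : Type*} [Fintype Ω] [Field F] [Fintype F]
    [DecidableEq F] (n : ℕ) [DecidableEq (Equiv.Perm (Fin n))]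
    (p : Ω → ℝ)
    (X Y R Z : Ω → (Fin n → F)) (Pm : Ω → Equiv.Perm (Fin n))
    (hRunif : ∀ r : Fin n → F, pmfOf p R r = 1 / (Fintype.card F : ℝ) ^ n)
    (hZunif : ∀ z : Fin n → F,
      pmfOf p Z z = if ∀ i, z i ≠ 0 then 1 / ((Fintype.card F : ℝ) - 1) ^ n else 0)
    (hindep : ∀ (r z : Fin n → F) (σ : Equiv.Perm (Fin n)) (x y : Fin n → F),
      pmfOf p (fun ω => (R ω, Z ω, Pm ω, X ω, Y ω)) (r, z, σ, x, y) =
        pmfOf p R r * pmfOf p Z z * pmfOf p Pm σ *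
          pmfOf p (fun ω => (X ω, Y ω)) (x, y))
    {γ : Type*} [DecidableEq γ]
    (C : (Fin n → F) → Equiv.Perm (Fin n) → (Fin n → F) → (Fin n → F) → γ)
    (b : Fin n → F) (g : γ) :
    pmfOf p (fun ω => ((fun i => Z ω (Pm ω i) * (R ω (Pm ω i) - Y ω (Pm ω i))),
        C (Z ω) (Pm ω) (X ω) (Y ω))) (b, g)
      = (1 / (Fintype.card F : ℝ) ^ n) *
          pmfOf p (fun ω => C (Z ω) (Pm ω) (X ω) (Y ω)) g := by
  classical
  set c : ℝ := 1 / (Fintype.card F : ℝ) ^ n with hc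
  set T : Ω → (Fin n → F) × Equiv.Perm (Fin n) × (Fin n → F) × (Fin n → F) × (Fin n → F) :=
    fun ω => (Z ω, Pm ω, X ω, Y ω, R ω) with hT
  have hTval : ∀ (z : Fin n → F) (σ : Equiv.Perm (Fin n)) (x y r : Fin n → F),
      pmfOf p T (z, σ, x, y, r)
        = c * (pmfOf p Z z * (pmfOf p Pm σ * pmfOf p (fun ω => (X ω, Y ω)) (x, y))) := by
    intro z σ x y r
    have := pmfOf_congr (A := T) (a := (z, σ, x, y, r))
      (A' := fun ω => (R ω, Z ω, Pm ω, X ω, Y ω)) (a' := (r, z, σ, x, y)) p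
      (by intro ω; simp only [hT, Prod.mk.injEq]; tauto)
    rw [this, hindep, hRunif]; ring
  have hL : pmfOf p (fun ω => ((fun i => Z ω (Pm ω i) * (R ω (Pm ω i) - Y ω (Pm ω i))),
      C (Z ω) (Pm ω) (X ω) (Y ω))) (b, g)
      = ∑ t : (Fin n → F) × Equiv.Perm (Fin n) × (Fin n → F) × (Fin n → F) × (Fin n → F),
          if ((fun i => t.1 (t.2.1 i) * (t.2.2.2.2 (t.2.1 i) - t.2.2.2.1 (t.2.1 i))),
              C t.1 t.2.1 t.2.2.1 t.2.2.2.1) = (b, g) then pmfOf p T t else 0 :=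
    pmf_comp p T (fun t => ((fun i => t.1 (t.2.1 i) * (t.2.2.2.2 (t.2.1 i) - t.2.2.2.1 (t.2.1 i))),
              C t.1 t.2.1 t.2.2.1 t.2.2.2.1)) (b, g)
  have hR : pmfOf p (fun ω => C (Z ω) (Pm ω) (X ω) (Y ω)) g
      = ∑ t : (Fin n → F) × Equiv.Perm (Fin n) × (Fin n → F) × (Fin n → F) × (Fin n → F),
          if C t.1 t.2.1 t.2.2.1 t.2.2.2.1 = g then pmfOf p T t else 0 :=
    pmf_comp p T (fun t => C t.1 t.2.1 t.2.2.1 t.2.2.2.1) g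
  rw [hL, hR]
  simp only [Fintype.sum_prod_type, Finset.mul_sum]
  refine Finset.sum_congr rfl fun z _ => Finset.sum_congr rfl fun σ _ =>
    Finset.sum_congr rfl fun x _ => Finset.sum_congr rfl fun y _ => ?_
  simp only [hTval]
  by_cases hC : C z σ x y = g
  · simp only [hC, Prod.mk.injEq, and_true, if_true]
    by_cases hz : ∀ i, z i ≠ 0
    · have hbij : ∀ r : Fin n → F,
          ((fun i => z (σ i) * (r (σ i) - y (σ i))) = b)
            ↔ r = (fun j => (z j)⁻¹ * b (σ.symm j) + y j) := by
        intro r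
        constructor
        · intro h; funext j
          have h1 := congrFun h (σ.symm j)
          simp only [Equiv.apply_symm_apply] at h1
          have hzj := hz j
          field_simp
          linear_combination h1
        · intro h; subst h; funext i
          simp only [Equiv.symm_apply_apply]
          have hzi := hz (σ i)
          field_simp
          ring
      rw [Finset.sum_congr rfl (fun r _ => if_congr (hbij r) rfl rfl)]
      rw [Finset.sum_ite_eq' Finset.univ (fun j => (z j)⁻¹ * b (σ.symm j) + y j)]
      simp only [Finset.mem_univ, if_true]
      rw [Finset.sum_const, Finset.card_univ, nsmul_eq_mul]
      have hcard : (Fintype.card (Fin n → F) : ℝ) = (Fintype.card F : ℝ) ^ n := by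
        rw [Fintype.card_fun, Fintype.card_fin]; push_cast; ring
      have h1 : (Fintype.card F : ℝ) ^ n * c = 1 := by
        have : (0:ℝ) < (Fintype.card F : ℝ) := by
          exact_mod_cast Fintype.card_pos
        rw [hc]; field_simp
      have hF0 : (Fintype.card F : ℝ) ≠ 0 := by
        exact_mod_cast Fintype.card_ne_zero
      rw [hcard, hc]
      field_simp
    · have hZ0 : pmfOf p Z z = 0 := by rw [hZunif]; exact if_neg hz
      simp [hZ0]
  · simp [hC]

lemma ent_core {β γ : Type*} [Fintype β] [Fintype γ] (f : β × γ → ℝ) (g : γ → ℝ) (c : ℝ)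
    (hfg : ∀ b cc, f (b, cc) = g cc * c) :
    ∑ v, Real.negMulLog (f v)
      = ((Fintype.card β : ℝ) * c) * (∑ cc, Real.negMulLog (g cc))
        + ((Fintype.card β : ℝ) * Real.negMulLog c) * (∑ cc, g cc) := by
  rw [Fintype.sum_prod_type]
  have step : ∀ b : β, ∑ cc, Real.negMulLog (f (b, cc))
      = c * (∑ cc, Real.negMulLog (g cc)) + Real.negMulLog c * (∑ cc, g cc) := by
    intro b
    have : ∀ cc : γ, Real.negMulLog (f (b, cc))
        = c * Real.negMulLog (g cc) + Real.negMulLog c * (g cc) := by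
      intro cc; rw [hfg, Real.negMulLog_mul]; ring
    rw [Finset.sum_congr rfl fun cc _ => this cc, Finset.sum_add_distrib,
      ← Finset.mul_sum, ← Finset.mul_sum]
  rw [Finset.sum_congr rfl fun b _ => step b, Finset.sum_const, Finset.card_univ,
    nsmul_eq_mul]
  ring

/-- Share independence in `HamDist`: with `R^n` uniform on
`F^n`, `Z^n` uniform on `(F\{0})^n`, `π` uniform on permutations, and
`(R^n, Z^n, π)` jointly independent of `(X^n, Y^n)`, the share
`B^n = π(Z^n ⊗ (R^n ⊖ Y^n))` is conditionally independent of `(X^n, Y^n)`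
given `S = A^n ⊕ B^n = π(Z^n ⊗ (X^n ⊖ Y^n))`; formally
`H(X^n, Y^n | B^n, S) = H(X^n, Y^n | S)`. -/
theorem hamDist_share_independence {Ω F : Type*} [Fintype Ω] [Field F] [Fintype F]
    [DecidableEq F] (n : ℕ) [DecidableEq (Equiv.Perm (Fin n))]
    (p : Ω → ℝ) (hp0 : ∀ ω, 0 ≤ p ω) (hp1 : ∑ ω, p ω = 1)
    (X Y R Z : Ω → (Fin n → F)) (Pm : Ω → Equiv.Perm (Fin n))
    (hRunif : ∀ r : Fin n → F, pmfOf p R r = 1 / (Fintype.card F : ℝ) ^ n)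
    (hZunif : ∀ z : Fin n → F,
      pmfOf p Z z = if ∀ i, z i ≠ 0 then 1 / ((Fintype.card F : ℝ) - 1) ^ n else 0)
    (hPmunif : ∀ σ : Equiv.Perm (Fin n), pmfOf p Pm σ = 1 / (Nat.factorial n : ℝ))
    (hindep : ∀ (r z : Fin n → F) (σ : Equiv.Perm (Fin n)) (x y : Fin n → F),
      pmfOf p (fun ω => (R ω, Z ω, Pm ω, X ω, Y ω)) (r, z, σ, x, y) =
        pmfOf p R r * pmfOf p Z z * pmfOf p Pm σ *
          pmfOf p (fun ω => (X ω, Y ω)) (x, y)) :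
    condEntH p (fun ω => (X ω, Y ω))
        (fun ω => ((fun i => Z ω (Pm ω i) * (R ω (Pm ω i) - Y ω (Pm ω i))),
                   (fun i => Z ω (Pm ω i) * (X ω (Pm ω i) - Y ω (Pm ω i))))) =
      condEntH p (fun ω => (X ω, Y ω))
        (fun ω => fun i => Z ω (Pm ω i) * (X ω (Pm ω i) - Y ω (Pm ω i))) := by
  classical
  have hBS : ∀ bv sv : Fin n → F,
      pmfOf p (fun ω => ((fun i => Z ω (Pm ω i) * (R ω (Pm ω i) - Y ω (Pm ω i))),
          (fun i => Z ω (Pm ω i) * (X ω (Pm ω i) - Y ω (Pm ω i))))) (bv, sv)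
        = pmfOf p (fun ω => fun i => Z ω (Pm ω i) * (X ω (Pm ω i) - Y ω (Pm ω i))) sv
            * (1 / (Fintype.card F : ℝ) ^ n) := by
    intro bv sv
    rw [mul_comm]
    exact key_factor n p X Y R Z Pm hRunif hZunif hindep
      (fun z σ x y => fun i => z (σ i) * (x (σ i) - y (σ i))) bv sv
  have hV : ∀ (xy : (Fin n → F) × (Fin n → F)) (bv sv : Fin n → F),
      pmfOf p (fun ω => ((X ω, Y ω),
          ((fun i => Z ω (Pm ω i) * (R ω (Pm ω i) - Y ω (Pm ω i))),
           (fun i => Z ω (Pm ω i) * (X ω (Pm ω i) - Y ω (Pm ω i)))))) (xy, (bv, sv))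
        = pmfOf p (fun ω => ((X ω, Y ω),
            fun i => Z ω (Pm ω i) * (X ω (Pm ω i) - Y ω (Pm ω i)))) (xy, sv)
            * (1 / (Fintype.card F : ℝ) ^ n) := by
    intro xy bv sv
    rw [mul_comm]
    rw [pmfOf_congr p (A' := fun ω =>
        ((fun i => Z ω (Pm ω i) * (R ω (Pm ω i) - Y ω (Pm ω i))),
         ((X ω, Y ω), fun i => Z ω (Pm ω i) * (X ω (Pm ω i) - Y ω (Pm ω i)))))
        (a' := (bv, (xy, sv)))
        (by intro ω; simp only [Prod.mk.injEq]; tauto)]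
    exact key_factor n p X Y R Z Pm hRunif hZunif hindep
      (fun z σ x y => ((x, y), fun i => z (σ i) * (x (σ i) - y (σ i)))) bv (xy, sv)
  have hcb : (Fintype.card (Fin n → F) : ℝ) * (1 / (Fintype.card F : ℝ) ^ n) = 1 := by
    have hF0 : (Fintype.card F : ℝ) ≠ 0 := by exact_mod_cast Fintype.card_ne_zero
    rw [Fintype.card_fun, Fintype.card_fin]
    push_cast
    field_simp
  have hsumS : ∑ sv : Fin n → F,
      pmfOf p (fun ω => fun i => Z ω (Pm ω i) * (X ω (Pm ω i) - Y ω (Pm ω i))) sv = 1 := by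
    rw [sum_pmfOf, hp1]
  have hsumW : ∑ w : ((Fin n → F) × (Fin n → F)) × (Fin n → F),
      pmfOf p (fun ω => ((X ω, Y ω),
        fun i => Z ω (Pm ω i) * (X ω (Pm ω i) - Y ω (Pm ω i)))) w = 1 := by
    rw [sum_pmfOf, hp1]
  unfold condEntH entH
  have h2 : ∑ v : (Fin n → F) × (Fin n → F),
      Real.negMulLog (pmfOf p (fun ω =>
        ((fun i => Z ω (Pm ω i) * (R ω (Pm ω i) - Y ω (Pm ω i))),
         (fun i => Z ω (Pm ω i) * (X ω (Pm ω i) - Y ω (Pm ω i))))) v)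
      = (∑ sv : Fin n → F, Real.negMulLog (pmfOf p (fun ω =>
          fun i => Z ω (Pm ω i) * (X ω (Pm ω i) - Y ω (Pm ω i))) sv))
        + (Fintype.card (Fin n → F) : ℝ)
            * Real.negMulLog (1 / (Fintype.card F : ℝ) ^ n) := by
    rw [ent_core _ _ _ (fun bv sv => hBS bv sv), hcb, hsumS, one_mul, mul_one]
  have h1 : ∑ v : ((Fin n → F) × (Fin n → F)) × ((Fin n → F) × (Fin n → F)),
      Real.negMulLog (pmfOf p (fun ω => ((X ω, Y ω),
        ((fun i => Z ω (Pm ω i) * (R ω (Pm ω i) - Y ω (Pm ω i))),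
         (fun i => Z ω (Pm ω i) * (X ω (Pm ω i) - Y ω (Pm ω i)))))) v)
      = (∑ w : ((Fin n → F) × (Fin n → F)) × (Fin n → F),
          Real.negMulLog (pmfOf p (fun ω => ((X ω, Y ω),
            fun i => Z ω (Pm ω i) * (X ω (Pm ω i) - Y ω (Pm ω i)))) w))
        + (Fintype.card (Fin n → F) : ℝ)
            * Real.negMulLog (1 / (Fintype.card F : ℝ) ^ n) := by
    rw [Fintype.sum_prod_type]
    have inner : ∀ xy : (Fin n → F) × (Fin n → F),
        ∑ bs : (Fin n → F) × (Fin n → F),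
          Real.negMulLog (pmfOf p (fun ω => ((X ω, Y ω),
            ((fun i => Z ω (Pm ω i) * (R ω (Pm ω i) - Y ω (Pm ω i))),
             (fun i => Z ω (Pm ω i) * (X ω (Pm ω i) - Y ω (Pm ω i)))))) (xy, bs))
        = ((Fintype.card (Fin n → F) : ℝ) * (1 / (Fintype.card F : ℝ) ^ n))
            * (∑ sv : Fin n → F, Real.negMulLog (pmfOf p (fun ω => ((X ω, Y ω),
                fun i => Z ω (Pm ω i) * (X ω (Pm ω i) - Y ω (Pm ω i)))) (xy, sv)))
          + ((Fintype.card (Fin n → F) : ℝ)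
              * Real.negMulLog (1 / (Fintype.card F : ℝ) ^ n))
            * (∑ sv : Fin n → F, pmfOf p (fun ω => ((X ω, Y ω),
                fun i => Z ω (Pm ω i) * (X ω (Pm ω i) - Y ω (Pm ω i)))) (xy, sv)) :=
      fun xy => ent_core _ _ _ (fun bv sv => hV xy bv sv)
    rw [Finset.sum_congr rfl fun xy _ => inner xy, Finset.sum_add_distrib,
      ← Finset.mul_sum, ← Finset.mul_sum, hcb, one_mul]
    rw [← Fintype.sum_prod_type (f := fun w : ((Fin n → F) × (Fin n → F)) × (Fin n → F) =>
        Real.negMulLog (pmfOf p (fun ω => ((X ω, Y ω),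
          fun i => Z ω (Pm ω i) * (X ω (Pm ω i) - Y ω (Pm ω i)))) w))]
    rw [← Fintype.sum_prod_type (f := fun w : ((Fin n → F) × (Fin n → F)) × (Fin n → F) =>
        pmfOf p (fun ω => ((X ω, Y ω),
          fun i => Z ω (Pm ω i) * (X ω (Pm ω i) - Y ω (Pm ω i)))) w)]
    rw [hsumW, mul_one]
  rw [h1, h2]
  ring
end
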